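/- For the weight W with entries W(x)_{nm} = √(1-x²) ∑_{t=0}^{m} α_t(m,n) U_{n+m-2t}(x) (m ≤ n), one has (H_0)_{nm} = ∫_{-1}^{1} W(x)_{nm} dx = δ_{nm} (π/2) (2ℓ+1)²/((n+1)(2ℓ-n+1)). -/

import Mathlib

open Matrix


/-- Pochhammer symbol (rising factorial) `(a)_k`. -/
noncomputable def poch (a : ℝ) (k : ℕ) : ℝ := ∏ i ∈ Finset.range k, (a + i)

/-- Gegenbauer polynomial `C_n^{(α)}(x)`. -/
noncomputable def Geg (α : ℝ) (n : ℕ) (x : ℝ) : ℝ :=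
  (poch (2*α) n / (Nat.factorial n : ℝ)) *
    ∑ j ∈ Finset.range (n+1),
      poch (-(n:ℝ)) j * poch ((n:ℝ) + 2*α) j / (poch (α + 1/2) j * (Nat.factorial j : ℝ))
        * ((1-x)/2)^j

/-- Chebyshev polynomial of the second kind. -/
noncomputable def ChebU (r : ℕ) (x : ℝ) : ℝ :=
  ((r:ℝ)+1) * ∑ j ∈ Finset.range (r+1),
      poch (-(r:ℝ)) j * poch ((r:ℝ)+2) j / (poch (3/2) j * (Nat.factorial j : ℝ))
        * ((1-x)/2)^j

/-- The coefficient `α_t(m,n)` of the weight, with `L = 2ℓ`. -/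
noncomputable def alphaCoef (L m n t : ℕ) : ℝ :=
  (((L:ℝ)+1)/((n:ℝ)+1)) * ((Nat.factorial (L-m) : ℝ) * (Nat.factorial m : ℝ)
      / (Nat.factorial L : ℝ))
    * (-1)^(m-t) * (poch ((n:ℝ)-L) (m-t) / poch ((n:ℝ)+2) (m-t))
    * (poch ((L:ℝ)+2-t) t / (Nat.factorial t : ℝ))

/-- The `(n,m)` entry of the weight for `m ≤ n`. -/
noncomputable def Wentry (L : ℕ) (x : ℝ) (n m : ℕ) : ℝ :=
  Real.sqrt (1-x^2) * ∑ t ∈ Finset.range (m+1), alphaCoef L m n t * ChebU (n+m-2*t) x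

/-- The matrix weight `W(x)`, symmetric, with `L = 2ℓ`. -/
noncomputable def Wmat (L : ℕ) (x : ℝ) : Matrix (Fin (L+1)) (Fin (L+1)) ℝ :=
  Matrix.of fun n m => if (m:ℕ) ≤ (n:ℕ) then Wentry L x (n:ℕ) (m:ℕ) else Wentry L x (m:ℕ) (n:ℕ)

lemma poch_zero (a : ℝ) : poch a 0 = 1 := by simp [poch]

lemma poch_succ (a : ℝ) (k : ℕ) : poch a (k+1) = poch a k * (a + k) := by
  simp [poch, Finset.prod_range_succ]

lemma poch_succ' (a : ℝ) (k : ℕ) : poch a (k+1) = poch (a+1) k * a := by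
  simp only [poch, Finset.prod_range_succ']
  congr 1
  · exact Finset.prod_congr rfl (by intros; push_cast; ring)
  · simp

lemma poch_neg (j d : ℕ) :
    poch (-((j+d : ℕ) : ℝ)) j = (-1)^j * ((j+d).factorial : ℝ) / (d.factorial : ℝ) := by
  induction j generalizing d with
  | zero =>
    simp only [Nat.zero_add, poch_zero, pow_zero, one_mul]
    rw [div_self (Nat.cast_ne_zero.mpr (Nat.factorial_ne_zero d))]
  | succ j ih =>
    rw [poch_succ']
    have h : (-((j+1+d : ℕ) : ℝ)) + 1 = -((j+d : ℕ) : ℝ) := by push_cast; ring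
    rw [h, ih]
    have : (j+1+d).factorial = (j+1+d) * (j+d).factorial := by
      rw [show j+1+d = (j+d)+1 by ring, Nat.factorial_succ]
    rw [this]
    have hd : (d.factorial : ℝ) ≠ 0 := Nat.cast_ne_zero.mpr (Nat.factorial_ne_zero d)
    field_simp
    push_cast
    ring

lemma poch_neg_zero (r j : ℕ) (h : r < j) : poch (-(r : ℝ)) j = 0 := by
  apply Finset.prod_eq_zero (Finset.mem_range.mpr h)
  simp

lemma poch_nat (c k : ℕ) : poch ((c:ℝ)+1) k = ((c+k).factorial : ℝ) / (c.factorial : ℝ) := by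
  induction k with
  | zero => simp [poch_zero, Nat.factorial_ne_zero]
  | succ k ih =>
    rw [poch_succ, ih, show c+(k+1) = (c+k)+1 by ring, Nat.factorial_succ]
    have hc : (c.factorial : ℝ) ≠ 0 := Nat.cast_ne_zero.mpr (Nat.factorial_ne_zero c)
    field_simp
    push_cast
    ring

lemma poch_half (j : ℕ) : poch (3/2) j = ((2*j+1).factorial : ℝ) / (4^j * (j.factorial : ℝ)) := by
  induction j with
  | zero => simp [poch_zero]
  | succ j ih =>
    have e1 : (2*(j+1)+1).factorial = (2*j+3)*((2*j+2)*(2*j+1).factorial) := by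
      rw [show 2*(j+1)+1 = (2*j+2)+1 by ring, Nat.factorial_succ,
        show 2*j+2 = (2*j+1)+1 by ring, Nat.factorial_succ]
    have e2 : (j+1).factorial = (j+1)*j.factorial := Nat.factorial_succ j
    rw [poch_succ, ih, e1, e2]
    push_cast
    have h1 : ((2*j+1).factorial : ℝ) ≠ 0 := Nat.cast_ne_zero.mpr (Nat.factorial_ne_zero _)
    have h2 : (j.factorial : ℝ) ≠ 0 := Nat.cast_ne_zero.mpr (Nat.factorial_ne_zero _)
    have h4 : (4:ℝ)^j ≠ 0 := by positivity
    field_simp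
    ring

noncomputable def AC (r j : ℕ) : ℝ :=
  if j ≤ r then (-1)^j * 4^j * ((r+j+1).factorial : ℝ)
    / (((r-j).factorial : ℝ) * ((2*j+1).factorial : ℝ)) else 0

lemma AC_eq (j d : ℕ) : AC (j+d) j
    = (-1)^j * 4^j * ((2*j+d+1).factorial : ℝ) / ((d.factorial : ℝ) * ((2*j+1).factorial : ℝ)) := by
  unfold AC
  rw [if_pos (Nat.le_add_right j d), show j+d+j+1 = 2*j+d+1 from by omega,
    show j+d-j = d from by omega]

lemma AC_big (r j : ℕ) (h : r < j) : AC r j = 0 := if_neg (by omega)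

lemma fact_ne (n : ℕ) : ((n.factorial : ℝ)) ≠ 0 := Nat.cast_ne_zero.mpr (Nat.factorial_ne_zero n)

lemma chebU_eq_sum (r : ℕ) (x : ℝ) :
    ChebU r x = ∑ j ∈ Finset.range (r+1), AC r j * ((1-x)/2)^j := by
  unfold ChebU
  rw [Finset.mul_sum]
  refine Finset.sum_congr rfl ?_
  intro j hj
  have hjr : j ≤ r := Nat.lt_succ_iff.mp (Finset.mem_range.mp hj)
  obtain ⟨d, rfl⟩ : ∃ d, r = j + d := ⟨r - j, by omega⟩
  have h2 : ((j+d:ℕ):ℝ)+2 = ((j+d+1:ℕ):ℝ)+1 := by push_cast; ring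
  rw [poch_neg, h2, poch_nat, poch_half, AC_eq, show j+d+1+j = 2*j+d+1 from by omega]
  have e : ((j+d+1).factorial : ℝ) = (j+d+1) * ((j+d).factorial : ℝ) := by
    rw [Nat.factorial_succ]; push_cast; ring
  rw [e]
  have n1 := fact_ne (j+d); have n2 := fact_ne d; have n3 := fact_ne (2*j+1)
  have n4 := fact_ne j; have n5 := fact_ne (2*j+d+1)
  have h4 : (4:ℝ)^j ≠ 0 := by positivity
  have hjd : ((j:ℝ)+d+1) ≠ 0 := by positivity
  push_cast
  field_simp

lemma fact_step (a b : ℕ) (h : a = b + 1) : ((a.factorial : ℝ)) = (b+1) * (b.factorial : ℝ) := by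
  subst h; rw [Nat.factorial_succ]; push_cast; ring

lemma AC_rec0 (r : ℕ) : AC (r+2) 0 = 2*AC (r+1) 0 - AC r 0 := by
  have h1 := AC_eq 0 (r+2)
  have h2 := AC_eq 0 (r+1)
  have h3 := AC_eq 0 r
  simp only [Nat.zero_add] at h1 h2 h3
  rw [h1, h2, h3]
  rw [fact_step (2*0+(r+2)+1) (2*0+(r+1)+1) (by omega), fact_step (2*0+(r+1)+1) (2*0+r+1) (by omega),
    fact_step (r+2) (r+1) (by omega), fact_step (r+1) r (by omega)]
  have n1 := fact_ne r; have n2 := fact_ne (2*0+r+1); have n3 := fact_ne 1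
  field_simp
  push_cast
  ring

lemma AC_rec (r j : ℕ) :
    AC (r+2) (j+1) = 2*AC (r+1) (j+1) - 4*AC (r+1) j - AC r (j+1) := by
  rcases Nat.lt_or_ge r (j+1) with hr | hr
  · rw [AC_big r (j+1) hr]
    rcases Nat.lt_or_ge (r+1) (j+1) with hr1 | hr1
    · rw [AC_big (r+1) (j+1) hr1]
      rcases Nat.lt_or_ge (r+1) j with hr2 | hr2
      · rw [AC_big (r+1) j hr2, AC_big (r+2) (j+1) (by omega)]; ring
      · have hj : j = r + 1 := by omega
        subst hj
        rw [AC_eq (r+2) 0, AC_eq (r+1) 0]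
        have hX := fact_ne (2*(r+2)+0+1)
        have hY := fact_ne (2*(r+1)+0+1)
        rw [show (2*(r+2)+1) = (2*(r+2)+0+1) from by omega,
          show (2*(r+1)+1) = (2*(r+1)+0+1) from by omega]
        field_simp
        ring
    · have hj : j = r := by omega
      subst hj
      rw [AC_eq (j+1) 1, AC_eq (j+1) 0, AC_eq j 1]
      rw [show (2*(j+1)+1+1) = (2*j+4) from by omega,
        show (2*(j+1)+0+1) = (2*j+3) from by omega,
        show (2*j+1+1) = (2*j+2) from by omega]
      rw [fact_step (2*j+4) (2*j+3) (by omega), fact_step (2*j+3) (2*j+2) (by omega),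
        fact_step (2*j+2) (2*j+1) (by omega)]
      have n1 := fact_ne (2*j+1); have n0 := fact_ne 0; have nn := fact_ne 1
      field_simp
      push_cast
      ring
  · obtain ⟨d, rfl⟩ : ∃ d, r = (j+1) + d := ⟨r - (j+1), by omega⟩
    have e1 : AC ((j+1)+d+2) (j+1) = (-1)^(j+1) * 4^(j+1) * ((2*(j+1)+(d+2)+1).factorial : ℝ)
        / (((d+2).factorial : ℝ) * ((2*(j+1)+1).factorial : ℝ)) := by
      rw [show (j+1)+d+2 = (j+1)+(d+2) from by omega]; exact AC_eq (j+1) (d+2)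
    have e2 : AC ((j+1)+d+1) (j+1) = (-1)^(j+1) * 4^(j+1) * ((2*(j+1)+(d+1)+1).factorial : ℝ)
        / (((d+1).factorial : ℝ) * ((2*(j+1)+1).factorial : ℝ)) := by
      rw [show (j+1)+d+1 = (j+1)+(d+1) from by omega]; exact AC_eq (j+1) (d+1)
    have e3 : AC ((j+1)+d+1) j = (-1)^j * 4^j * ((2*j+(d+2)+1).factorial : ℝ)
        / (((d+2).factorial : ℝ) * ((2*j+1).factorial : ℝ)) := by
      rw [show (j+1)+d+1 = j+(d+2) from by omega]; exact AC_eq j (d+2)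
    rw [e1, e2, e3, AC_eq (j+1) d]
    rw [show (2*(j+1)+(d+2)+1) = (2*j+d+5) from by omega,
      show (2*(j+1)+(d+1)+1) = (2*j+d+4) from by omega,
      show (2*j+(d+2)+1) = (2*j+d+3) from by omega,
      show (2*(j+1)+d+1) = (2*j+d+3) from by omega,
      show (2*(j+1)+1) = (2*j+3) from by omega]
    rw [fact_step (2*j+d+5) (2*j+d+4) (by omega), fact_step (2*j+d+4) (2*j+d+3) (by omega),
      fact_step (d+2) (d+1) (by omega), fact_step (d+1) d (by omega),
      fact_step (2*j+3) (2*j+2) (by omega), fact_step (2*j+2) (2*j+1) (by omega)]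
    have n1 := fact_ne d; have n2 := fact_ne (2*j+1); have n3 := fact_ne (2*j+d+3)
    field_simp
    push_cast
    ring

lemma chebU_sum_ext (r N : ℕ) (h : r + 1 ≤ N) (x : ℝ) :
    ChebU r x = ∑ j ∈ Finset.range N, AC r j * ((1-x)/2)^j := by
  rw [chebU_eq_sum]
  apply Finset.sum_subset (Finset.range_subset_range.mpr h)
  intro j _ hj
  rw [AC_big r j (by simp at hj; omega), zero_mul]

lemma chebU_rec (r : ℕ) (x : ℝ) :
    ChebU (r+2) x = 2*x*ChebU (r+1) x - ChebU r x := by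
  set u : ℝ := (1-x)/2 with hu
  have hx : 2*x = 2 - 4*u := by rw [hu]; ring
  rw [chebU_sum_ext (r+2) (r+3) (by omega), chebU_sum_ext (r+1) (r+3) (by omega),
    chebU_sum_ext r (r+3) (by omega), hx]
  have e4 : (4*u) * ∑ j ∈ Finset.range (r+3), AC (r+1) j * u^j
      = ∑ i ∈ Finset.range (r+2), 4 * AC (r+1) i * u^(i+1) := by
    rw [Finset.sum_range_succ, AC_big (r+1) (r+2) (by omega), zero_mul, add_zero,
      Finset.mul_sum]
    exact Finset.sum_congr rfl (fun i _ => by ring)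
  have e2 : (2:ℝ) * ∑ j ∈ Finset.range (r+3), AC (r+1) j * u^j
      = (∑ i ∈ Finset.range (r+2), 2 * AC (r+1) (i+1) * u^(i+1)) + 2 * AC (r+1) 0 := by
    rw [Finset.mul_sum, Finset.sum_range_succ' (fun j => 2 * (AC (r+1) j * u^j)) (r+2)]
    simp only [pow_zero, mul_one]
    congr 1
    exact Finset.sum_congr rfl (fun i _ => by ring)
  have e0 : ∑ j ∈ Finset.range (r+3), AC r j * u^j
      = (∑ i ∈ Finset.range (r+2), AC r (i+1) * u^(i+1)) + AC r 0 := by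
    rw [Finset.sum_range_succ' (fun j => AC r j * u^j) (r+2)]
    simp only [pow_zero, mul_one]
  have eL : ∑ j ∈ Finset.range (r+3), AC (r+2) j * u^j
      = (∑ i ∈ Finset.range (r+2), AC (r+2) (i+1) * u^(i+1)) + AC (r+2) 0 := by
    rw [Finset.sum_range_succ' (fun j => AC (r+2) j * u^j) (r+2)]
    simp only [pow_zero, mul_one]
  rw [sub_mul, e4, e2, e0, eL, AC_rec0 r]
  have key : ∀ i ∈ Finset.range (r+2),
      AC (r+2) (i+1) * u^(i+1) =
        2 * AC (r+1) (i+1) * u^(i+1) - 4 * AC (r+1) i * u^(i+1) - AC r (i+1) * u^(i+1) := by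
    intro i _
    rw [AC_rec r i]; ring
  rw [Finset.sum_congr rfl key, Finset.sum_sub_distrib, Finset.sum_sub_distrib]
  ring

lemma AC_00 : AC 0 0 = 1 := by norm_num [AC]

lemma AC_10 : AC 1 0 = 2 := by norm_num [AC, Nat.factorial]

lemma AC_11 : AC 1 1 = -4 := by norm_num [AC, Nat.factorial]

lemma chebU_zero (x : ℝ) : ChebU 0 x = 1 := by
  rw [chebU_eq_sum]; simp [AC_00]

lemma chebU_one (x : ℝ) : ChebU 1 x = 2*x := by
  rw [chebU_eq_sum, Finset.sum_range_succ, Finset.sum_range_one, AC_10, AC_11]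
  ring

lemma chebU_eq_U (r : ℕ) (x : ℝ) :
    ChebU r x = (Polynomial.Chebyshev.U ℝ (r : ℤ)).eval x := by
  induction r using Nat.twoStepInduction with
  | zero => simp [chebU_zero, Polynomial.Chebyshev.U_zero]
  | one => simp [chebU_one, Polynomial.Chebyshev.U_one]
  | more n ih1 ih2 =>
    have : ((n+2 : ℕ) : ℤ) = (n : ℤ) + 2 := by push_cast; ring
    rw [chebU_rec, this, Polynomial.Chebyshev.U_add_two]
    push_cast at ih1 ih2 ⊢
    simp only [Polynomial.eval_sub, Polynomial.eval_mul, Polynomial.eval_ofNat, Polynomial.eval_X]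
    rw [ih1, ih2]

section TrigSection
open intervalIntegral Real

lemma integral_cos_smul (c : ℝ) (hc : c ≠ 0) :
    ∫ θ in (0:ℝ)..π, Real.cos (c*θ) = Real.sin (c*π) / c := by
  rw [intervalIntegral.integral_comp_mul_left (fun y => Real.cos y) hc]
  simp [integral_cos, hc]
  ring

lemma integral_sin_mul_sin_nat (c : ℝ) (hc1 : Real.sin ((c-1)*π) = 0)
    (hc2 : Real.sin ((c+1)*π) = 0) (h1 : c - 1 ≠ 0) (h2 : c + 1 ≠ 0) :
    ∫ θ in (0:ℝ)..π, Real.sin θ * Real.sin (c*θ) = 0 := by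
  have key : ∀ θ : ℝ, Real.sin θ * Real.sin (c*θ)
      = (Real.cos ((c-1)*θ) - Real.cos ((c+1)*θ))/2 := by
    intro θ
    have e1 : (c-1)*θ = c*θ - θ := by ring
    have e2 : (c+1)*θ = c*θ + θ := by ring
    rw [e1, e2, Real.cos_sub, Real.cos_add]
    ring
  simp only [key]
  rw [intervalIntegral.integral_div, intervalIntegral.integral_sub
    (by apply Continuous.intervalIntegrable; continuity)
    (by apply Continuous.intervalIntegrable; continuity)]
  rw [integral_cos_smul _ h1, integral_cos_smul _ h2, hc1, hc2]
  simp

lemma chebU_continuous (r : ℕ) : Continuous (fun x => ChebU r x) := by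
  have : (fun x => ChebU r x) = fun x => (Polynomial.Chebyshev.U ℝ (r:ℤ)).eval x := by
    funext x; exact chebU_eq_U r x
  rw [this]
  exact (Polynomial.Chebyshev.U ℝ (r:ℤ)).continuous

lemma sqrt_mul_chebU_continuous (r : ℕ) :
    Continuous (fun x : ℝ => Real.sqrt (1-x^2) * ChebU r x) := by
  apply Continuous.mul
  · exact Real.continuous_sqrt.comp (by continuity)
  · exact chebU_continuous r

lemma integral_sqrt_chebU (r : ℕ) :
    ∫ x in (-1:ℝ)..1, Real.sqrt (1-x^2) * ChebU r x
      = if r = 0 then Real.pi/2 else 0 := by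
  have hsub : ∫ x in (-1:ℝ)..1, Real.sqrt (1-x^2) * ChebU r x
      = ∫ θ in (0:ℝ)..π, Real.sin θ * (Real.sqrt (1-(Real.cos θ)^2) * ChebU r (Real.cos θ)) := by
    have := intervalIntegral.integral_comp_smul_deriv
      (f := Real.cos) (f' := fun θ => -Real.sin θ)
      (g := fun x => Real.sqrt (1-x^2) * ChebU r x)
      (a := 0) (b := π)
      (fun θ _ => Real.hasDerivAt_cos θ)
      (continuous_sin.neg.continuousOn)
      (sqrt_mul_chebU_continuous r)
    rw [Real.cos_zero, Real.cos_pi] at this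
    calc ∫ x in (-1:ℝ)..1, Real.sqrt (1-x^2) * ChebU r x
        = -∫ x in (1:ℝ)..(-1), Real.sqrt (1-x^2) * ChebU r x :=
          (intervalIntegral.integral_symm 1 (-1))
      _ = -∫ θ in (0:ℝ)..π, (fun θ => -Real.sin θ) θ •
            ((fun x => Real.sqrt (1-x^2) * ChebU r x) ∘ Real.cos) θ := by rw [this]
      _ = ∫ θ in (0:ℝ)..π, Real.sin θ * (Real.sqrt (1-(Real.cos θ)^2) * ChebU r (Real.cos θ)) := by
          rw [← intervalIntegral.integral_neg]
          congr 1
          funext θ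
          simp only [smul_eq_mul, Function.comp, neg_mul, neg_neg]
  rw [hsub]
  have hcongr : ∫ θ in (0:ℝ)..π, Real.sin θ * (Real.sqrt (1-(Real.cos θ)^2) * ChebU r (Real.cos θ))
      = ∫ θ in (0:ℝ)..π, Real.sin θ * Real.sin (((r:ℝ)+1)*θ) := by
    apply intervalIntegral.integral_congr
    intro θ hθ
    dsimp only
    rw [Set.uIcc_of_le Real.pi_nonneg] at hθ
    have hs : Real.sin θ ≥ 0 := Real.sin_nonneg_of_nonneg_of_le_pi hθ.1 hθ.2
    have h1 : (1:ℝ) - (Real.cos θ)^2 = (Real.sin θ)^2 := by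
      rw [Real.sin_sq]
    rw [h1, Real.sqrt_sq hs, chebU_eq_U]
    have hU := Polynomial.Chebyshev.U_real_cos θ (r:ℤ)
    have : (((r:ℤ):ℝ)+1)*θ = ((r:ℝ)+1)*θ := by push_cast; ring
    rw [this] at hU
    calc Real.sin θ * (Real.sin θ * (Polynomial.Chebyshev.U ℝ (r:ℤ)).eval (Real.cos θ))
        = Real.sin θ * ((Polynomial.Chebyshev.U ℝ (r:ℤ)).eval (Real.cos θ) * Real.sin θ) := by ring
      _ = Real.sin θ * Real.sin (((r:ℝ)+1)*θ) := by rw [hU]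
  rw [hcongr]
  rcases Nat.eq_zero_or_pos r with hr | hr
  · subst hr
    simp only [Nat.cast_zero, zero_add, one_mul, if_true]
    have : ∀ θ : ℝ, Real.sin θ * Real.sin θ = Real.sin θ ^ 2 := fun θ => (sq (Real.sin θ)).symm
    simp only [this]
    rw [integral_sin_sq]
    simp
  · rw [if_neg (by omega)]
    apply integral_sin_mul_sin_nat
    · rw [show ((r:ℝ)+1-1) = (r:ℝ) by ring]
      exact_mod_cast Real.sin_nat_mul_pi r
    · rw [show ((r:ℝ)+1+1) = ((r+2 : ℕ):ℝ) by push_cast; ring]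
      exact_mod_cast Real.sin_nat_mul_pi (r+2)
    · simp only [add_sub_cancel_right]
      exact_mod_cast Nat.cast_ne_zero.mpr (by omega : r ≠ 0)
    · positivity

end TrigSection

lemma alpha_diag (L n : ℕ) (hn : n ≤ L) :
    alphaCoef L n n n = ((L:ℝ)+1)^2 / (((n:ℝ)+1) * ((L:ℝ)-(n:ℝ)+1)) := by
  unfold alphaCoef
  rw [Nat.sub_self, poch_zero, poch_zero]
  have hc : (L:ℝ)+2-(n:ℝ) = (((L-n+1 : ℕ)):ℝ)+1 := by
    push_cast [Nat.cast_sub hn]; ring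
  rw [hc, poch_nat (L-n+1) n, show L-n+1+n = L+1 from by omega]
  rw [fact_step (L+1) L rfl, fact_step (L-n+1) (L-n) rfl]
  have n1 := fact_ne L; have n2 := fact_ne n; have n3 := fact_ne (L-n)
  have h4 : ((n:ℝ)+1) ≠ 0 := by positivity
  have h5 : ((L:ℝ)-(n:ℝ)+1) ≠ 0 := by
    have : ((L:ℝ)) - n ≥ 0 := by
      have := Nat.cast_le (α := ℝ).mpr hn; linarith
    linarith
  have h6 : ((L-n:ℕ):ℝ) = (L:ℝ)-(n:ℝ) := by push_cast [Nat.cast_sub hn]; ring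
  rw [h6]
  field_simp

lemma integral_Wentry (L n m : ℕ) (hm : m ≤ n) (hL : n ≤ L) :
    ∫ x in (-1:ℝ)..1, Wentry L x n m
      = if n = m then Real.pi/2 * (((L:ℝ)+1)^2 / (((n:ℝ)+1)*((L:ℝ)-(n:ℝ)+1))) else 0 := by
  have h1 : ∀ x, Wentry L x n m = ∑ t ∈ Finset.range (m+1),
      alphaCoef L m n t * (Real.sqrt (1-x^2) * ChebU (n+m-2*t) x) := by
    intro x
    unfold Wentry
    rw [Finset.mul_sum]
    exact Finset.sum_congr rfl (fun t _ => by ring)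
  simp only [h1]
  rw [intervalIntegral.integral_finset_sum]
  swap
  · intro t _
    exact (continuous_const.mul (sqrt_mul_chebU_continuous (n+m-2*t))).intervalIntegrable _ _
  have h2 : ∀ t ∈ Finset.range (m+1),
      (∫ x in (-1:ℝ)..1, alphaCoef L m n t * (Real.sqrt (1-x^2) * ChebU (n+m-2*t) x))
        = alphaCoef L m n t * (if n+m-2*t = 0 then Real.pi/2 else 0) := by
    intro t _
    rw [intervalIntegral.integral_const_mul, integral_sqrt_chebU]
  rw [Finset.sum_congr rfl h2]
  by_cases hnm : n = m
  · subst hnm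
    rw [if_pos rfl]
    rw [Finset.sum_eq_single_of_mem n (Finset.self_mem_range_succ n)]
    · rw [if_pos (by omega), alpha_diag L n hL]
      ring
    · intro t ht htne
      have : n+n-2*t ≠ 0 := by simp at ht; omega
      rw [if_neg this, mul_zero]
  · rw [if_neg hnm]
    apply Finset.sum_eq_zero
    intro t ht
    have : n+m-2*t ≠ 0 := by simp at ht; omega
    rw [if_neg this, mul_zero]


/-- The zeroth moment of the weight:
`(H_0)_{nm} = ∫_{-1}^1 W(x)_{nm} dx = δ_{nm} (π/2)(2ℓ+1)²/((n+1)(2ℓ-n+1))`. -/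
theorem zeroth_moment (L : ℕ) (n m : Fin (L+1)) :
    (∫ x in (-1:ℝ)..1, Wmat L x n m) =
      if n = m then
        (Real.pi/2) * ((L:ℝ)+1)^2 / ((((n:ℕ):ℝ)+1) * ((L:ℝ)-((n:ℕ):ℝ)+1))
      else 0 := by
  have hn : (n:ℕ) ≤ L := by omega
  have hm : (m:ℕ) ≤ L := by omega
  by_cases h : (m:ℕ) ≤ (n:ℕ)
  · simp only [Wmat, Matrix.of_apply, if_pos h]
    rw [integral_Wentry L n m h hn]
    by_cases he : n = m
    · rw [if_pos he, if_pos (by rw [he])]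
      ring
    · rw [if_neg (fun hc => he (Fin.ext hc)), if_neg he]
  · have h' : (n:ℕ) ≤ (m:ℕ) := le_of_not_ge h
    simp only [Wmat, Matrix.of_apply, if_neg h]
    rw [integral_Wentry L m n h' hm]
    have hne : (m:ℕ) ≠ (n:ℕ) := by omega
    rw [if_neg hne, if_neg (fun hc : n = m => hne (by rw [hc]))]
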